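/- A degree-(m+2) structure (u,v,w) satisfies the six codifferential equations if and only if either (v = (0,0) and a₁a₅ + a₂a₆ = 0) or (a₅ = −(m+2)a₂, a₆ = (m+2)a₁, and a₁a₃ + a₂a₄ = 0). -/
import Mathlib


namespace LinfClassification

variable {K : Type*} [Field K] [CharZero K]

/-- A degree-(m+2) structure `((a₁,a₂),(a₃,a₄),(a₅,a₆))` on the 1|2-dimensional
graded space, encoding the odd coderivation
`d = a₁ψ^{1,0,m+1}_3 + a₂ψ^{0,1,m+1}_3 + a₃ψ^{0,0,m+2}_1 + a₄ψ^{0,0,m+2}_2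
 + a₅ψ^{1,1,m}_1 + a₆ψ^{1,1,m}_2`. -/
abbrev Str (K : Type*) := (K × K) × (K × K) × (K × K)

/-- The six codifferential equations expressing `[d,d] = 0`. -/
def IsCodiff (m : ℕ) (d : Str K) : Prop :=
  d.1.1 * d.2.2.1 + d.1.2 * d.2.2.2 = 0 ∧
  d.1.1 * d.2.1.1 + d.1.2 * d.2.1.2 = 0 ∧
  d.2.1.1 * (d.2.2.1 + ((m : K) + 2) * d.1.2) = 0 ∧
  d.2.1.2 * (d.2.2.1 + ((m : K) + 2) * d.1.2) = 0 ∧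
  d.2.1.1 * (d.2.2.2 - ((m : K) + 2) * d.1.1) = 0 ∧
  d.2.1.2 * (d.2.2.2 - ((m : K) + 2) * d.1.1) = 0

/-- Action of `(g, q) ∈ GL₂(K) × Kˣ` with `g = [[p, q'], [r, s]]`
(`det g = p·s - q'·r ≠ 0`) and scalar `t ≠ 0` on a degree-(m+2) structure:
`(g,t)·(u,v,w) = (tᵐ·(u g), t^{m+2}·g⁻¹ v, det(g)·tᵐ·g⁻¹ w)`,
`u` a row vector and `v, w` column vectors. -/
def act (m : ℕ) (p q r s t : K) (d : Str K) : Str K :=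
  ((t ^ m * (d.1.1 * p + d.1.2 * r), t ^ m * (d.1.1 * q + d.1.2 * s)),
   (t ^ (m + 2) * (p * s - q * r)⁻¹ * (s * d.2.1.1 - q * d.2.1.2),
    t ^ (m + 2) * (p * s - q * r)⁻¹ * (-r * d.2.1.1 + p * d.2.1.2)),
   (t ^ m * (s * d.2.2.1 - q * d.2.2.2),
    t ^ m * (-r * d.2.2.1 + p * d.2.2.2)))

/-- Linear equivalence: two degree-(m+2) structures lie in the same orbit. -/
def Equiv' (m : ℕ) (d d' : Str K) : Prop :=
  ∃ p q r s t : K, p * s - q * r ≠ 0 ∧ t ≠ 0 ∧ act m p q r s t d = d'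

/-- The normal form `d_∞ = ψ^{1,1,m}_1`. -/
def dInf : Str K := ((0, 0), (0, 0), (1, 0))

/-- The normal form `d_λ = ψ^{0,1,m+1}_3 + λψ^{1,1,m}_1`. -/
def dLam (lam : K) : Str K := ((0, 1), (0, 0), (lam, 0))

/-- The normal form `d_* = ψ^{0,0,m+2}_1`. -/
def dStar : Str K := ((0, 0), (1, 0), (0, 0))

/-- The normal form `d_# = ψ^{0,1,m+1}_3 + ψ^{0,0,m+2}_1 - (m+2)ψ^{1,1,m}_1`. -/
def dSharp (m : ℕ) : Str K := ((0, 1), (1, 0), (-((m : K) + 2), 0))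

/-- A degree-(m+2) structure satisfies the six codifferential equations iff either
`v = (0,0)` and `a₁a₅ + a₂a₆ = 0`, or `a₅ = -(m+2)a₂`, `a₆ = (m+2)a₁` and
`a₁a₃ + a₂a₄ = 0`. -/
theorem codifferential_iff (m : ℕ) (d : Str K) :
    IsCodiff m d ↔
      (d.2.1 = (0, 0) ∧ d.1.1 * d.2.2.1 + d.1.2 * d.2.2.2 = 0) ∨
      (d.2.2.1 = -(((m : K) + 2) * d.1.2) ∧ d.2.2.2 = ((m : K) + 2) * d.1.1 ∧
        d.1.1 * d.2.1.1 + d.1.2 * d.2.1.2 = 0) := by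
  obtain ⟨⟨a1,a2⟩,⟨a3,a4⟩,⟨a5,a6⟩⟩ := d
  simp only [IsCodiff, Prod.mk.injEq]
  constructor
  · rintro ⟨e1,e2,e3,e4,e5,e6⟩
    by_cases h3 : a3 = 0
    · by_cases h4 : a4 = 0
      · exact Or.inl ⟨⟨h3, h4⟩, e1⟩
      · refine Or.inr ⟨?_, ?_, e2⟩
        · have := mul_eq_zero.mp e4
          rcases this with h|h
          · exact absurd h h4
          · linear_combination h
        · have := mul_eq_zero.mp e6
          rcases this with h|h
          · exact absurd h h4
          · linear_combination h
    · refine Or.inr ⟨?_, ?_, e2⟩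
      · rcases mul_eq_zero.mp e3 with h|h
        · exact absurd h h3
        · linear_combination h
      · rcases mul_eq_zero.mp e5 with h|h
        · exact absurd h h3
        · linear_combination h
  · rintro (⟨⟨h3,h4⟩,h1⟩|⟨h5,h6,h2⟩)
    · subst h3; subst h4; refine ⟨h1, ?_, ?_, ?_, ?_, ?_⟩ <;> ring
    · subst h5; subst h6; refine ⟨?_, h2, ?_, ?_, ?_, ?_⟩ <;> ring

end LinfClassification
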